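/- For a building set B on [n], the weighted quasisymmetric enumerator of the nestohedron P_B coincides with the value of the universal morphism of combinatorial Hopf algebras: F_q(P_B) = Ψ_q([B]). Equivalently, F_q(P_B) = Σ_L q^{rk_B(L)} M_{type(L)}, the sum over all flags L of subsets of [n]. -/

import Mathlib

open scoped Classical Pointwise BigOperators


/-- The dot product pairing on `ℝⁿ`. -/
def dotp {n : ℕ} (ω x : Fin n → ℝ) : ℝ := ∑ i, ω i * x i

/-- The set of points of `Q` on which the linear functional `⟨ω, ·⟩` attains its maximum. -/
def argmaxSet {n : ℕ} (Q : Set (Fin n → ℝ)) (ω : Fin n → ℝ) : Set (Fin n → ℝ) :=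
  {x | x ∈ Q ∧ ∀ y ∈ Q, dotp ω y ≤ dotp ω x}

/-- `G` is a face of `Q` : it is the argmax set of some linear functional. -/
def IsFace {n : ℕ} (Q G : Set (Fin n → ℝ)) : Prop := ∃ ω : Fin n → ℝ, G = argmaxSet Q ω

/-- The dimension of a convex body: the rank of its direction vector space. -/
noncomputable def pdim {n : ℕ} (s : Set (Fin n → ℝ)) : ℕ := Module.finrank ℝ (vectorSpan ℝ s)

/-- `Q` is a (nonempty) convex polytope. -/
def IsPolytope {n : ℕ} (Q : Set (Fin n → ℝ)) : Prop :=
  ∃ V : Finset (Fin n → ℝ), V.Nonempty ∧ Q = convexHull ℝ (V : Set (Fin n → ℝ))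

/-- A flag `∅ ⊂ F₁ ⊂ ⋯ ⊂ F_k ⊂ [n]` of subsets of `[n]`, recorded by its set
`C = {F₁,…,F_k}` of proper nonempty intermediate subsets, which form a chain. -/
def IsFlag (n : ℕ) (C : Finset (Finset (Fin n))) : Prop :=
  (∀ A ∈ C, A.Nonempty ∧ A ≠ Finset.univ) ∧ (∀ A ∈ C, ∀ B ∈ C, A ⊆ B ∨ B ⊆ A)

/-- The level of an element: the number of members of the chain not containing it.  Elements of
`F_i ∖ F_{i-1}` have level `i - 1`-ish: level `0` on the smallest set, etc. -/
def lv {n : ℕ} (C : Finset (Finset (Fin n))) (p : Fin n) : ℕ := (C.filter (fun A => p ∉ A)).card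

/-- The `j`-th member `F_j` of the full chain `∅ = F₀ ⊂ F₁ ⊂ ⋯ ⊂ F_{k+1} = [n]` of the flag. -/
def fullChain {n : ℕ} (C : Finset (Finset (Fin n))) (j : ℕ) : Finset (Fin n) :=
  Finset.univ.filter (fun p => lv C p < j)

/-- The type of a flag: the composition `(|F₁|-|F₀|, …, |F_{k+1}|-|F_k|)` of `n`. -/
def flagType {n : ℕ} (C : Finset (Finset (Fin n))) : List ℕ :=
  (List.range (C.card + 1)).map (fun j => (fullChain C (j + 1)).card - (fullChain C j).card)

/-- The relative interior of the braid cone of a flag: coordinates are equal inside each block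
`F_{i+1} ∖ F_i` and strictly increase from earlier blocks to later blocks. -/
def relintBraidCone {n : ℕ} (C : Finset (Finset (Fin n))) : Set (Fin n → ℝ) :=
  {x | ∀ p q : Fin n, ((∀ A ∈ C, (p ∈ A ↔ q ∈ A)) → x p = x q) ∧
      ((∃ A ∈ C, p ∈ A ∧ q ∉ A) → x p < x q)}

/-- Homogeneous quasisymmetric functions in the monomial basis: finitely supported
coefficient functions on compositions (lists of positive integers). -/
abbrev QS : Type := (List ℕ) →₀ ℚ

/-- The monomial quasisymmetric function `M_α`. -/
noncomputable def Mc (l : List ℕ) : QS := Finsupp.single l 1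

/-- The principal specialization at `-1`:  `ps(M_α)(-1) = (-1)^{k(α)}`, extended linearly. -/
noncomputable def psNeg (f : QS) : ℚ := f.sum (fun l c => c * (-1) ^ l.length)

/-- The `f`-polynomial of a polytope `P ⊆ ℝⁿ`, evaluated at `t`. -/
noncomputable def fPoly {n : ℕ} (P : Set (Fin n → ℝ)) (t : ℚ) : ℚ :=
  ∑ i ∈ Finset.range n, ((Set.ncard {G : Set (Fin n → ℝ) | IsFace P G ∧ pdim G = i} : ℚ) * t ^ i)

/-- The weighted quasisymmetric enumerator `F_q(Q) = Σ_F q^{rk(F)} M_{type(F)}`, where the rank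
statistic `rk` on flags is given as an argument. -/
noncomputable def FqEnum (n : ℕ) (rk : Finset (Finset (Fin n)) → ℕ) (q : ℚ) : QS :=
  ∑ C : Finset (Finset (Fin n)), if IsFlag n C then q ^ (rk C) • Mc (flagType C) else 0

/-- A building set on the ground set `[n]`: a collection of nonempty subsets containing all
singletons and closed under unions of intersecting members. -/
def IsBuildingSet (n : ℕ) (B : Finset (Finset (Fin n))) : Prop :=
  (∀ I ∈ B, I.Nonempty) ∧ (∀ i : Fin n, {i} ∈ B) ∧
    (∀ I ∈ B, ∀ J ∈ B, (I ∩ J).Nonempty → I ∪ J ∈ B)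

/-- The face `Conv{e_i : i ∈ I}` of the standard simplex. -/
noncomputable def simplexFace {n : ℕ} (I : Finset (Fin n)) : Set (Fin n → ℝ) :=
  convexHull ℝ ((fun i => (Pi.single i 1 : Fin n → ℝ)) '' (I : Set (Fin n)))

/-- The nestohedron `P_B = Σ_{I ∈ B} Conv{e_i : i ∈ I}` (Minkowski sum). -/
noncomputable def nestoh {n : ℕ} (B : Finset (Finset (Fin n))) : Set (Fin n → ℝ) :=
  ∑ I ∈ B, simplexFace I

/-- The facet `F_I` of the nestohedron labelled by `I ∈ B ∖ {[n]}`: the face on which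
`Σ_{i ∈ I} x_i` is minimized. -/
noncomputable def facetOf {n : ℕ} (B : Finset (Finset (Fin n))) (I : Finset (Fin n)) :
    Set (Fin n → ℝ) :=
  argmaxSet (nestoh B) (fun j => if j ∈ I then (-1 : ℝ) else 0)

/-- A nested set for a connected building set `B`: a subcollection of `B ∖ {[n]}` any two of whose
members are nested or disjoint, such that no union of at least two pairwise disjoint members
belongs to `B`. -/
def IsNestedSet {n : ℕ} (B N : Finset (Finset (Fin n))) : Prop :=
  N ⊆ B.erase Finset.univ ∧
  (∀ I ∈ N, ∀ J ∈ N, I ⊆ J ∨ J ⊆ I ∨ Disjoint I J) ∧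
  (∀ D ∈ N.powerset, 2 ≤ D.card → (∀ I ∈ D, ∀ J ∈ D, I ≠ J → Disjoint I J) →
    D.sup id ∉ B)

/-- The set of roots of `I` with respect to a nested set `N`:
`I^{root} = I ∖ ⋃ {J ∈ N : J ⊊ I}`. -/
def rootsOf {n : ℕ} (N : Finset (Finset (Fin n))) (I : Finset (Fin n)) : Finset (Fin n) :=
  I \ ((N.filter (fun J => J ⊂ I)).sup id)

/-- The preorder `≼_G` on `[n]` attached to the face `G` of `P_B` with nested set `N`:
`i ≼_G j` iff `i ∈ I` and `j ∈ I^{root}` for some `I ∈ N ∪ {[n]}`. -/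
def preN {n : ℕ} (N : Finset (Finset (Fin n))) (i j : Fin n) : Prop :=
  ∃ I ∈ insert Finset.univ N, i ∈ I ∧ j ∈ rootsOf N I

/-- The face of the nestohedron `P_B` corresponding to a nested set `N`:
`G = F_{I₁} ∩ ⋯ ∩ F_{I_m}` (and `G = P_B` when `N = ∅`). -/
noncomputable def faceOfNested {n : ℕ} (B N : Finset (Finset (Fin n))) : Set (Fin n → ℝ) :=
  nestoh B ∩ ⋂ I ∈ N, facetOf B I

/-- The number of connected components of a building set: the number of its maximal members. -/
def cComp {n : ℕ} (B : Finset (Finset (Fin n))) : ℕ :=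
  (B.filter (fun I => ∀ J ∈ B, I ⊆ J → I = J)).card

/-- The minor `(B|_X)/Y` (restriction to `X` followed by contraction of `Y ⊆ X`): all nonempty
`I ⊆ X ∖ Y` such that `I ∪ S' ∈ B` for some `S' ⊆ Y`. -/
def bsMinor {n : ℕ} (B : Finset (Finset (Fin n))) (X Y : Finset (Fin n)) :
    Finset (Finset (Fin n)) :=
  (X \ Y).powerset.filter (fun I => I.Nonempty ∧ ∃ S' ∈ Y.powerset, I ∪ S' ∈ B)

/-- The rank `rk_B(L) = Σ_j rk(B|_{I_j}/I_{j-1})` of a flag `L` with respect to `B`, where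
`rk(B') = (size of the ground set of B') - c(B')`. -/
def rkB {n : ℕ} (B : Finset (Finset (Fin n))) (C : Finset (Finset (Fin n))) : ℕ :=
  ∑ j ∈ Finset.range (C.card + 1),
    ((fullChain C (j + 1)).card - (fullChain C j).card -
      cComp (bsMinor B (fullChain C (j + 1)) (fullChain C j)))

/-- The quotient building set `B/L = ⊕_j (B|_{I_j})/I_{j-1}` of a flag `L`. -/
def quotientBS {n : ℕ} (B : Finset (Finset (Fin n))) (C : Finset (Finset (Fin n))) :
    Finset (Finset (Fin n)) :=
  (Finset.range (C.card + 1)).biUnion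
    (fun j => bsMinor B (fullChain C (j + 1)) (fullChain C j))

section PartA

open Finset

variable {n : ℕ}

lemma dotp_add (ω x y : Fin n → ℝ) : dotp ω (x + y) = dotp ω x + dotp ω y := by
  simp [dotp, mul_add, Finset.sum_add_distrib]

lemma dotp_smul (ω : Fin n → ℝ) (c : ℝ) (x : Fin n → ℝ) : dotp ω (c • x) = c * dotp ω x := by
  simp only [dotp, Finset.mul_sum, Pi.smul_apply, smul_eq_mul]
  exact Finset.sum_congr rfl (fun i _ => by ring)

lemma dotp_single (ω : Fin n → ℝ) (i : Fin n) : dotp ω (Pi.single i 1) = ω i := by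
  simp [dotp, Pi.single_apply, mul_ite, Finset.sum_ite_eq']

/-- maximizing points of a finite set. -/
noncomputable def maxpts (ω : Fin n → ℝ) (s : Finset (Fin n → ℝ)) : Finset (Fin n → ℝ) :=
  s.filter (fun x => ∀ y ∈ s, dotp ω y ≤ dotp ω x)

lemma maxpts_subset (ω : Fin n → ℝ) (s : Finset (Fin n → ℝ)) : maxpts ω s ⊆ s :=
  Finset.filter_subset _ _

lemma maxpts_nonempty (ω : Fin n → ℝ) {s : Finset (Fin n → ℝ)} (hs : s.Nonempty) :
    (maxpts ω s).Nonempty := by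
  obtain ⟨x, hx, hmax⟩ := s.exists_max_image (dotp ω) hs
  exact ⟨x, Finset.mem_filter.2 ⟨hx, hmax⟩⟩

lemma maxpts_add (ω : Fin n → ℝ) {s t : Finset (Fin n → ℝ)} (hs : s.Nonempty)
    (ht : t.Nonempty) : maxpts ω (s + t) = maxpts ω s + maxpts ω t := by
  obtain ⟨a0, ha0, ha0m⟩ := s.exists_max_image (dotp ω) hs
  obtain ⟨b0, hb0, hb0m⟩ := t.exists_max_image (dotp ω) ht
  ext x
  simp only [maxpts, Finset.mem_filter, Finset.mem_add]
  constructor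
  · rintro ⟨⟨a, ha, b, hb, rfl⟩, hmax⟩
    have h1 := hmax (a0 + b0) ⟨a0, ha0, b0, hb0, rfl⟩
    rw [dotp_add, dotp_add] at h1
    have ha' : dotp ω a ≤ dotp ω a0 := ha0m a ha
    have hb' : dotp ω b ≤ dotp ω b0 := hb0m b hb
    refine ⟨a, ⟨ha, fun y hy => ?_⟩, b, ⟨hb, fun y hy => ?_⟩, rfl⟩
    · have := ha0m y hy; linarith
    · have := hb0m y hy; linarith
  · rintro ⟨a, ⟨ha, ham⟩, b, ⟨hb, hbm⟩, rfl⟩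
    refine ⟨⟨a, ha, b, hb, rfl⟩, ?_⟩
    rintro y ⟨a', ha', b', hb', rfl⟩
    rw [dotp_add, dotp_add]
    exact add_le_add (ham a' ha') (hbm b' hb')

lemma sum_finset_nonempty {ι : Type*} (A : Finset ι) (f : ι → Finset (Fin n → ℝ))
    (hf : ∀ i ∈ A, (f i).Nonempty) : (∑ i ∈ A, f i).Nonempty := by
  induction A using Finset.induction_on with
  | empty => exact ⟨0, by simp [Finset.sum_empty, Finset.zero_mem_zero]⟩
  | @insert a A' hnotmem ih =>
    rw [Finset.sum_insert hnotmem]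
    obtain ⟨x, hx⟩ := hf a (Finset.mem_insert_self a A')
    obtain ⟨y, hy⟩ := ih (fun i hi => hf i (Finset.mem_insert_of_mem hi))
    exact ⟨x + y, Finset.mem_add.2 ⟨x, hx, y, hy, rfl⟩⟩

lemma maxpts_sum {ι : Type*} (ω : Fin n → ℝ) (A : Finset ι) (f : ι → Finset (Fin n → ℝ))
    (hf : ∀ i ∈ A, (f i).Nonempty) :
    maxpts ω (∑ i ∈ A, f i) = ∑ i ∈ A, maxpts ω (f i) := by
  induction A using Finset.induction_on with
  | empty =>
    simp only [Finset.sum_empty]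
    show Finset.filter _ {0} = {0}
    rw [Finset.filter_singleton, if_pos]
    intro y hy
    rw [Finset.mem_singleton.1 hy]
  | @insert a A' hnotmem ih =>
    rw [Finset.sum_insert hnotmem, Finset.sum_insert hnotmem,
      maxpts_add ω (hf a (Finset.mem_insert_self a A'))
        (sum_finset_nonempty A' f (fun i hi => hf i (Finset.mem_insert_of_mem hi))),
      ih (fun i hi => hf i (Finset.mem_insert_of_mem hi))]

end PartA
section PartB
open Finset
variable {n : ℕ}

lemma hull_dotp_le (ω : Fin n → ℝ) (T : Finset (Fin n → ℝ)) {c : ℝ}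
    (h : ∀ y ∈ T, dotp ω y ≤ c) {x : Fin n → ℝ} (hx : x ∈ convexHull ℝ (T : Set (Fin n → ℝ))) :
    dotp ω x ≤ c := by
  rw [Finset.convexHull_eq] at hx
  obtain ⟨w, hw0, hw1, hwx⟩ := hx
  rw [← hwx, Finset.centerMass, hw1, inv_one, one_smul]
  have : dotp ω (∑ y ∈ T, w y • id y) = ∑ y ∈ T, w y * dotp ω y := by
    rw [dotp]
    simp only [Finset.sum_apply, Pi.smul_apply, smul_eq_mul, Finset.mul_sum]
    rw [Finset.sum_comm]
    refine Finset.sum_congr rfl (fun y _ => ?_)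
    rw [dotp, Finset.mul_sum]
    exact Finset.sum_congr rfl (fun i _ => by simp [id]; ring)
  rw [this]
  calc ∑ y ∈ T, w y * dotp ω y ≤ ∑ y ∈ T, w y * c := by
        refine Finset.sum_le_sum (fun y hy => ?_)
        exact mul_le_mul_of_nonneg_left (h y hy) (hw0 y hy)
    _ = c := by rw [← Finset.sum_mul, hw1, one_mul]

lemma hull_dotp_ge (ω : Fin n → ℝ) (T : Finset (Fin n → ℝ)) {c : ℝ}
    (h : ∀ y ∈ T, c ≤ dotp ω y) {x : Fin n → ℝ} (hx : x ∈ convexHull ℝ (T : Set (Fin n → ℝ))) :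
    c ≤ dotp ω x := by
  have hneg : dotp (-ω) x ≤ -c := by
    refine hull_dotp_le (-ω) T (fun y hy => ?_) hx
    have : dotp (-ω) y = -dotp ω y := by simp [dotp]
    rw [this]; linarith [h y hy]
  have : dotp (-ω) x = -dotp ω x := by simp [dotp]
  rw [this] at hneg; linarith

lemma argmax_convexHull (ω : Fin n → ℝ) (T : Finset (Fin n → ℝ)) (hT : T.Nonempty) :
    argmaxSet (convexHull ℝ (T : Set (Fin n → ℝ))) ω
      = convexHull ℝ ((maxpts ω T : Finset (Fin n → ℝ)) : Set (Fin n → ℝ)) := by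
  obtain ⟨y0, hy0T, hy0m⟩ := T.exists_max_image (dotp ω) hT
  set m := dotp ω y0 with hm
  have hmaxval : ∀ y ∈ maxpts ω T, dotp ω y = m := by
    intro y hy
    rw [maxpts, Finset.mem_filter] at hy
    exact le_antisymm (hy0m y hy.1) (hy.2 y0 hy0T)
  have hboundT : ∀ x ∈ convexHull ℝ (T : Set (Fin n → ℝ)), dotp ω x ≤ m :=
    fun x hx => hull_dotp_le ω T hy0m hx
  apply Set.Subset.antisymm
  · rintro x ⟨hxhull, hxmax⟩
    have hxm : dotp ω x = m := by
      refine le_antisymm (hboundT x hxhull) ?_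
      exact hxmax y0 (subset_convexHull ℝ _ hy0T)
    rw [Finset.convexHull_eq] at hxhull
    obtain ⟨w, hw0, hw1, hwx⟩ := hxhull
    -- every y with w y ≠ 0 is a maximizer
    have hkey : ∀ y ∈ T, w y ≠ 0 → y ∈ maxpts ω T := by
      intro y hyT hwy
      by_contra hnot
      -- then dotp ω y < m
      have hlt : dotp ω y < m := by
        rcases lt_or_eq_of_le (hy0m y hyT) with h | h
        · exact h
        · exact absurd (Finset.mem_filter.2 ⟨hyT, fun y' hy' => h ▸ hy0m y' hy'⟩) hnot
      have hsum : ∑ y ∈ T, w y * dotp ω y = m := by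
        have : dotp ω x = ∑ y ∈ T, w y * dotp ω y := by
          rw [← hwx, Finset.centerMass, hw1, inv_one, one_smul, dotp]
          simp only [Finset.sum_apply, Pi.smul_apply, smul_eq_mul, Finset.mul_sum]
          rw [Finset.sum_comm]
          refine Finset.sum_congr rfl (fun y _ => ?_)
          rw [dotp, Finset.mul_sum]
          exact Finset.sum_congr rfl (fun i _ => by simp [id]; ring)
        rw [← this, hxm]
      have hstrict : ∑ z ∈ T, w z * dotp ω z < ∑ z ∈ T, w z * m := by
        refine Finset.sum_lt_sum (fun z hz => mul_le_mul_of_nonneg_left (hy0m z hz) (hw0 z hz))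
          ⟨y, hyT, ?_⟩
        have : 0 < w y := lt_of_le_of_ne (hw0 y hyT) (Ne.symm hwy)
        exact mul_lt_mul_of_pos_left hlt this
      rw [hsum, ← Finset.sum_mul, hw1, one_mul] at hstrict
      exact lt_irrefl m hstrict
    have hfilter : T.filter (fun y => w y ≠ 0) ⊆ maxpts ω T := by
      intro y hy
      rw [Finset.mem_filter] at hy
      exact hkey y hy.1 hy.2
    rw [← hwx, ← Finset.centerMass_filter_ne_zero (w := w) id]
    refine Finset.centerMass_mem_convexHull _ (fun i hi => hw0 i (Finset.filter_subset _ _ hi))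
      ?_ (fun i hi => hfilter hi)
    rw [Finset.sum_filter_ne_zero, hw1]
    norm_num
  · intro x hx
    have hsub : (maxpts ω T : Set (Fin n → ℝ)) ⊆ (T : Set (Fin n → ℝ)) := by
      exact_mod_cast maxpts_subset ω T
    have hxT : x ∈ convexHull ℝ (T : Set (Fin n → ℝ)) := convexHull_mono hsub hx
    refine ⟨hxT, fun y hy => ?_⟩
    have hxm : dotp ω x = m := by
      refine le_antisymm (hboundT x hxT) ?_
      exact hull_dotp_ge ω (maxpts ω T) (fun z hz => (hmaxval z hz).ge) hx
    rw [hxm]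
    exact hboundT y hy

end PartB
section PartC
open Finset
variable {n : ℕ}

/-- The vertex set `{e_i : i ∈ I}` as a finset. -/
noncomputable def pts (I : Finset (Fin n)) : Finset (Fin n → ℝ) :=
  I.image (fun i => (Pi.single i 1 : Fin n → ℝ))

lemma coe_pts (I : Finset (Fin n)) :
    ((pts I : Finset (Fin n → ℝ)) : Set (Fin n → ℝ))
      = (fun i => (Pi.single i 1 : Fin n → ℝ)) '' (I : Set (Fin n)) := by
  rw [pts, Finset.coe_image]

lemma pts_nonempty {I : Finset (Fin n)} (hI : I.Nonempty) : (pts I).Nonempty :=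
  hI.image _

lemma single_injective' : Function.Injective (fun i : Fin n => (Pi.single i 1 : Fin n → ℝ)) := by
  intro i j h
  by_contra hne
  have := congrFun h i
  simp [Pi.single_apply, hne] at this

lemma coe_finset_sum {ι : Type*} (A : Finset ι) (f : ι → Finset (Fin n → ℝ)) :
    ((∑ i ∈ A, f i : Finset (Fin n → ℝ)) : Set (Fin n → ℝ)) = ∑ i ∈ A, ((f i : Set (Fin n → ℝ))) := by
  induction A using Finset.induction_on with
  | empty => simp
  | @insert a A' hnotmem ih =>
    rw [Finset.sum_insert hnotmem, Finset.sum_insert hnotmem, Finset.coe_add, ih]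

lemma hull_set_sum {ι : Type*} (A : Finset ι) (g : ι → Set (Fin n → ℝ)) :
    convexHull ℝ (∑ i ∈ A, g i) = ∑ i ∈ A, convexHull ℝ (g i) := by
  induction A using Finset.induction_on with
  | empty =>
    simp only [Finset.sum_empty]
    show convexHull ℝ {(0 : Fin n → ℝ)} = {0}
    exact convexHull_singleton 0
  | @insert a A' hnotmem ih =>
    rw [Finset.sum_insert hnotmem, Finset.sum_insert hnotmem, convexHull_add, ih]

lemma nestoh_eq_hull (B : Finset (Finset (Fin n))) :
    nestoh B = convexHull ℝ ((∑ I ∈ B, pts I : Finset (Fin n → ℝ)) : Set (Fin n → ℝ)) := by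
  rw [coe_finset_sum, hull_set_sum, nestoh]
  refine Finset.sum_congr rfl (fun I _ => ?_)
  rw [simplexFace, coe_pts]

/-- The set of `ω`-maximizing elements of `I`. -/
noncomputable def topPart (ω : Fin n → ℝ) (I : Finset (Fin n)) : Finset (Fin n) :=
  I.filter (fun i => ∀ i' ∈ I, ω i' ≤ ω i)

lemma maxpts_pts (ω : Fin n → ℝ) (I : Finset (Fin n)) :
    maxpts ω (pts I) = pts (topPart ω I) := by
  rw [maxpts, pts, Finset.filter_image, pts, topPart]
  congr 1
  refine Finset.filter_congr (fun i hi => ?_)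
  constructor
  · intro h i' hi'
    have := h (Pi.single i' 1) (Finset.mem_image_of_mem _ hi')
    rwa [dotp_single, dotp_single] at this
  · intro h y hy
    obtain ⟨i', hi', rfl⟩ := Finset.mem_image.1 hy
    rw [dotp_single, dotp_single]
    exact h i' hi'

lemma topPart_nonempty (ω : Fin n → ℝ) {I : Finset (Fin n)} (hI : I.Nonempty) :
    (topPart ω I).Nonempty := by
  obtain ⟨i, hi, hm⟩ := I.exists_max_image ω hI
  exact ⟨i, Finset.mem_filter.2 ⟨hi, hm⟩⟩

/-- Main geometric formula: the face of the nestohedron selected by `ω` is the convex hull of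
the finset `∑ I, pts (topPart ω I)`. -/
lemma argmax_nestoh (B : Finset (Finset (Fin n))) (hBne : ∀ I ∈ B, I.Nonempty) (ω : Fin n → ℝ) :
    argmaxSet (nestoh B) ω
      = convexHull ℝ ((∑ I ∈ B, pts (topPart ω I) : Finset (Fin n → ℝ)) : Set (Fin n → ℝ)) := by
  rw [nestoh_eq_hull, argmax_convexHull ω _ (sum_finset_nonempty B pts (fun I hI => pts_nonempty (hBne I hI))),
    maxpts_sum ω B pts (fun I hI => pts_nonempty (hBne I hI))]
  congr 2
  exact Finset.sum_congr rfl (fun I _ => maxpts_pts ω I)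

end PartC
section PartD
open Finset
variable {n : ℕ}

lemma vectorSpan_convexHull' (s : Set (Fin n → ℝ)) :
    vectorSpan ℝ (convexHull ℝ s) = vectorSpan ℝ s := by
  rw [← direction_affineSpan, affineSpan_convexHull, direction_affineSpan]

lemma vectorSpan_set_add {s t : Set (Fin n → ℝ)} (hs : s.Nonempty) (ht : t.Nonempty) :
    vectorSpan ℝ (s + t) = vectorSpan ℝ s ⊔ vectorSpan ℝ t := by
  obtain ⟨a0, ha0⟩ := hs
  obtain ⟨b0, hb0⟩ := ht
  rw [vectorSpan_def, vectorSpan_def, vectorSpan_def, ← Submodule.span_union]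
  apply le_antisymm
  · rw [Submodule.span_le]
    rintro x hx
    rw [Set.mem_vsub] at hx
    obtain ⟨u, hu, v, hv, rfl⟩ := hx
    obtain ⟨a, ha, b, hb, rfl⟩ := Set.mem_add.1 hu
    obtain ⟨a', ha', b', hb', rfl⟩ := Set.mem_add.1 hv
    have h1 : (a : Fin n → ℝ) - a' ∈ (s -ᵥ s) ∪ (t -ᵥ t) :=
      Set.mem_union_left _ (Set.mem_vsub.2 ⟨a, ha, a', ha', vsub_eq_sub a a'⟩)
    have h2 : (b : Fin n → ℝ) - b' ∈ (s -ᵥ s) ∪ (t -ᵥ t) :=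
      Set.mem_union_right _ (Set.mem_vsub.2 ⟨b, hb, b', hb', vsub_eq_sub b b'⟩)
    have : (a + b) -ᵥ (a' + b') = (a - a') + (b - b') := by
      rw [vsub_eq_sub]; abel
    rw [this]
    exact Submodule.add_mem _ (Submodule.subset_span h1) (Submodule.subset_span h2)
  · rw [Submodule.span_le]
    rintro x (hx | hx) <;> rw [Set.mem_vsub] at hx <;> obtain ⟨u, hu, v, hv, rfl⟩ := hx
    · have : u -ᵥ v = (u + b0) -ᵥ (v + b0) := by rw [vsub_eq_sub, vsub_eq_sub]; abel
      rw [this]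
      exact Submodule.subset_span (Set.mem_vsub.2
        ⟨u + b0, Set.mem_add.2 ⟨u, hu, b0, hb0, rfl⟩, v + b0,
          Set.mem_add.2 ⟨v, hv, b0, hb0, rfl⟩, rfl⟩)
    · have : u -ᵥ v = (a0 + u) -ᵥ (a0 + v) := by rw [vsub_eq_sub, vsub_eq_sub]; abel
      rw [this]
      exact Submodule.subset_span (Set.mem_vsub.2
        ⟨a0 + u, Set.mem_add.2 ⟨a0, ha0, u, hu, rfl⟩, a0 + v,
          Set.mem_add.2 ⟨a0, ha0, v, hv, rfl⟩, rfl⟩)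

lemma vectorSpan_zero_finset :
    vectorSpan ℝ (((0 : Finset (Fin n → ℝ)) : Set (Fin n → ℝ))) = ⊥ := by
  rw [Finset.coe_zero, vectorSpan_def]
  have : ((0 : Set (Fin n → ℝ)) -ᵥ 0) = {0} := by
    ext v
    rw [Set.mem_vsub]
    constructor
    · rintro ⟨a, ha, b, hb, rfl⟩
      rw [Set.mem_zero.1 ha, Set.mem_zero.1 hb]
      simp [vsub_eq_sub]
    · rintro rfl
      exact ⟨0, rfl, 0, rfl, by simp [vsub_eq_sub]⟩
  rw [this, Submodule.span_zero_singleton]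

lemma vectorSpan_finset_sum {ι : Type*} (A : Finset ι) (f : ι → Finset (Fin n → ℝ))
    (hf : ∀ i ∈ A, (f i).Nonempty) :
    vectorSpan ℝ ((∑ i ∈ A, f i : Finset (Fin n → ℝ)) : Set (Fin n → ℝ))
      = A.sup (fun i => vectorSpan ℝ ((f i : Set (Fin n → ℝ)))) := by
  induction A using Finset.induction_on with
  | empty => simpa using vectorSpan_zero_finset
  | @insert a A' hnotmem ih =>
    rw [Finset.sum_insert hnotmem, Finset.coe_add,
      vectorSpan_set_add (Finset.coe_nonempty.2 (hf a (Finset.mem_insert_self a A')))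
        (Finset.coe_nonempty.2
          (sum_finset_nonempty A' f (fun i hi => hf i (Finset.mem_insert_of_mem hi)))),
      ih (fun i hi => hf i (Finset.mem_insert_of_mem hi)), Finset.sup_insert]

/-- The set of elementary differences supported on `J`. -/
def diffSet (J : Finset (Fin n)) : Set (Fin n → ℝ) :=
  {v | ∃ i ∈ J, ∃ j ∈ J, (Pi.single i 1 : Fin n → ℝ) - Pi.single j 1 = v}

lemma vectorSpan_pts (J : Finset (Fin n)) :
    vectorSpan ℝ ((pts J : Finset (Fin n → ℝ)) : Set (Fin n → ℝ))
      = Submodule.span ℝ (diffSet J) := by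
  rw [vectorSpan_def]
  congr 1
  ext v
  rw [Set.mem_vsub, diffSet]
  constructor
  · rintro ⟨a, ha, b, hb, rfl⟩
    rw [coe_pts] at ha hb
    obtain ⟨i, hi, rfl⟩ := ha
    obtain ⟨j, hj, rfl⟩ := hb
    exact ⟨i, hi, j, hj, (vsub_eq_sub _ _).symm⟩
  · rintro ⟨i, hi, j, hj, rfl⟩
    refine ⟨Pi.single i 1, ?_, Pi.single j 1, ?_, vsub_eq_sub _ _⟩
    · rw [coe_pts]; exact ⟨i, hi, rfl⟩
    · rw [coe_pts]; exact ⟨j, hj, rfl⟩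

lemma diffSet_mono {J K : Finset (Fin n)} (h : J ⊆ K) : diffSet J ⊆ diffSet K := by
  rintro v ⟨i, hi, j, hj, rfl⟩
  exact ⟨i, h hi, j, h hj, rfl⟩

/-- The component-sum linear functional family. -/
noncomputable def cellMap (Cells : Finset (Finset (Fin n))) :
    (Fin n → ℝ) →ₗ[ℝ] ({M // M ∈ Cells} → ℝ) :=
  LinearMap.pi (fun M => ∑ i ∈ (M : Finset (Fin n)),
    (LinearMap.proj i : (Fin n → ℝ) →ₗ[ℝ] ℝ))

lemma cellMap_apply (Cells : Finset (Finset (Fin n))) (x : Fin n → ℝ) (M : {M // M ∈ Cells}) :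
    cellMap Cells x M = ∑ i ∈ (M : Finset (Fin n)), x i := by
  simp [cellMap, LinearMap.pi_apply, LinearMap.sum_apply, LinearMap.proj_apply]

lemma sum_single_mem (M : Finset (Fin n)) (i : Fin n) :
    ∑ p ∈ M, (Pi.single i 1 : Fin n → ℝ) p = if i ∈ M then 1 else 0 := by
  simp [Pi.single_apply, Finset.sum_ite_eq]

lemma finrank_cells (Cells : Finset (Finset (Fin n)))
    (hne : ∀ M ∈ Cells, M.Nonempty)
    (hdisj : ∀ M ∈ Cells, ∀ M' ∈ Cells, M ≠ M' → Disjoint M M')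
    (hcover : ∀ p : Fin n, ∃ M ∈ Cells, p ∈ M) :
    Module.finrank ℝ ↥(Cells.sup (fun M => Submodule.span ℝ (diffSet M))) = n - Cells.card := by
  classical
  -- membership characterization of cells
  have hmem_iff : ∀ M ∈ Cells, ∀ M' ∈ Cells,
      ∀ i : Fin n, i ∈ M → (i ∈ M' ↔ M' = M) := by
    rintro M hM M' hM' i hi
    constructor
    · intro hiM'
      by_contra hne'
      simpa using (hdisj M' hM' M hM hne').le_bot (Finset.mem_inter.2 ⟨hiM', hi⟩)
    · rintro rfl; exact hi
  -- W = ker L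
  have hWker : Cells.sup (fun M => Submodule.span ℝ (diffSet M))
      = LinearMap.ker (cellMap Cells) := by
    apply le_antisymm
    · apply Finset.sup_le
      intro M hM
      rw [Submodule.span_le]
      rintro v ⟨i, hi, j, hj, rfl⟩
      rw [SetLike.mem_coe, LinearMap.mem_ker]
      funext M'
      rw [LinearMap.map_sub]
      simp only [Pi.sub_apply, Pi.zero_apply, cellMap_apply]
      rw [← Finset.sum_sub_distrib]
      rw [Finset.sum_sub_distrib, sum_single_mem, sum_single_mem]
      have hiff : (i ∈ (M' : Finset (Fin n))) ↔ (j ∈ (M' : Finset (Fin n))) := by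
        rw [hmem_iff M hM (M' : Finset (Fin n)) M'.2 i hi,
          hmem_iff M hM (M' : Finset (Fin n)) M'.2 j hj]
      by_cases h : i ∈ (M' : Finset (Fin n))
      · rw [if_pos h, if_pos (hiff.1 h)]; ring
      · rw [if_neg h, if_neg (fun hj' => h (hiff.2 hj'))]; ring
    · intro x hx
      rw [LinearMap.mem_ker] at hx
      -- choose representatives
      have hrep : ∀ M : {M // M ∈ Cells}, ∃ p, p ∈ (M : Finset (Fin n)) :=
        fun M => hne M M.2
      choose r hr using hrep
      have hxM : ∀ M : {M // M ∈ Cells}, ∑ i ∈ (M : Finset (Fin n)), x i = 0 := by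
        intro M
        have := congrFun hx M
        rwa [cellMap_apply] at this
      -- x is the double sum of elementary differences
      have hdecomp : x = ∑ M ∈ Cells.attach, ∑ i ∈ (M : Finset (Fin n)),
          x i • ((Pi.single i 1 : Fin n → ℝ) - Pi.single (r M) 1) := by
        have hsplit : ∀ M : {M // M ∈ Cells},
            ∑ i ∈ (M : Finset (Fin n)), x i • ((Pi.single i 1 : Fin n → ℝ) - Pi.single (r M) 1)
              = ∑ i ∈ (M : Finset (Fin n)), x i • (Pi.single i 1 : Fin n → ℝ) := by
          intro M
          rw [Finset.sum_congr rfl (fun i _ => smul_sub (x i) _ _), Finset.sum_sub_distrib,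
            ← Finset.sum_smul, hxM M, zero_smul, sub_zero]
        rw [Finset.sum_congr rfl (fun M _ => hsplit M)]
        -- now show x = ∑ M ∑ i ∈ M, x i • e i
        have hbi : Finset.univ = Cells.biUnion id := by
          apply Finset.Subset.antisymm
          · intro p _
            obtain ⟨M, hM, hpM⟩ := hcover p
            exact Finset.mem_biUnion.2 ⟨M, hM, hpM⟩
          · intro p _; exact Finset.mem_univ p
        have hx_sum : ∑ i : Fin n, x i • (Pi.single i 1 : Fin n → ℝ) = x := by
          funext j
          simp [Pi.single_apply, Finset.sum_ite_eq]
        have hpd : (↑Cells : Set (Finset (Fin n))).PairwiseDisjoint id :=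
          fun M hM M' hM' hMM' => hdisj M hM M' hM' hMM'
        calc x = ∑ i : Fin n, x i • (Pi.single i 1 : Fin n → ℝ) := hx_sum.symm
          _ = ∑ i ∈ Cells.biUnion id, x i • (Pi.single i 1 : Fin n → ℝ) := by rw [← hbi]
          _ = ∑ M ∈ Cells, ∑ i ∈ M, x i • (Pi.single i 1 : Fin n → ℝ) :=
              Finset.sum_biUnion hpd
          _ = ∑ M ∈ Cells.attach, ∑ i ∈ (M : Finset (Fin n)),
                x i • (Pi.single i 1 : Fin n → ℝ) :=
              (Finset.sum_attach Cells
                (fun M => ∑ i ∈ M, x i • (Pi.single i 1 : Fin n → ℝ))).symm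
      rw [hdecomp]
      apply Submodule.sum_mem
      intro M _
      apply Submodule.sum_mem
      intro i hi
      apply Submodule.smul_mem
      have hinW : Submodule.span ℝ (diffSet (M : Finset (Fin n)))
          ≤ Cells.sup (fun M => Submodule.span ℝ (diffSet M)) :=
        Finset.le_sup (f := fun M => Submodule.span ℝ (diffSet M)) M.2
      exact hinW (Submodule.subset_span ⟨i, hi, r M, hr M, rfl⟩)
  -- L is surjective
  have hsurj : Function.Surjective (cellMap Cells) := by
    have hrep : ∀ M : {M // M ∈ Cells}, ∃ p, p ∈ (M : Finset (Fin n)) :=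
      fun M => hne M M.2
    choose r hr using hrep
    intro t
    refine ⟨∑ M ∈ Cells.attach, t M • (Pi.single (r M) 1 : Fin n → ℝ), ?_⟩
    funext M'
    rw [cellMap_apply]
    have : ∀ p ∈ (M' : Finset (Fin n)),
        (∑ M ∈ Cells.attach, t M • (Pi.single (r M) 1 : Fin n → ℝ)) p
          = ∑ M ∈ Cells.attach, t M * (Pi.single (r M) 1 : Fin n → ℝ) p := by
      intro p _
      simp
    rw [Finset.sum_congr rfl this, Finset.sum_comm]
    have hterm : ∀ M ∈ Cells.attach,
        ∑ p ∈ (M' : Finset (Fin n)), t M * (Pi.single (r M) 1 : Fin n → ℝ) p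
          = if M = M' then t M' else 0 := by
      intro M _
      rw [← Finset.mul_sum, sum_single_mem]
      by_cases h : M = M'
      · subst h
        rw [if_pos (hr M), if_pos rfl]
        ring
      · have hrm : r M ∉ (M' : Finset (Fin n)) := by
          intro hmem
          have heq : (M : Finset (Fin n)) ≠ (M' : Finset (Fin n)) :=
            fun e => h (Subtype.ext e)
          simpa using (hdisj _ M.2 _ M'.2 heq).le_bot (Finset.mem_inter.2 ⟨hr M, hmem⟩)
        rw [if_neg hrm, if_neg h]
        ring
    rw [Finset.sum_congr rfl hterm,
      Finset.sum_ite_eq' Cells.attach M' (fun _ => t M'),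
      if_pos (Finset.mem_attach _ _)]
  -- rank-nullity
  have hrange : LinearMap.range (cellMap Cells) = ⊤ := LinearMap.range_eq_top.2 hsurj
  have hrn := LinearMap.finrank_range_add_finrank_ker (cellMap Cells)
  rw [hrange] at hrn
  have hcard : Module.finrank ℝ ({M // M ∈ Cells} → ℝ) = Cells.card := by
    rw [Module.finrank_pi, Fintype.card_coe]
  have htop : Module.finrank ℝ (⊤ : Submodule ℝ ({M // M ∈ Cells} → ℝ))
      = Cells.card := by
    rw [finrank_top, hcard]
  have hdom : Module.finrank ℝ (Fin n → ℝ) = n := by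
    rw [Module.finrank_pi, Fintype.card_fin]
  rw [htop, hdom] at hrn
  rw [hWker]
  omega

end PartD
section PartE
open Finset
variable {n : ℕ}

lemma mem_fullChain {C : Finset (Finset (Fin n))} {p : Fin n} {j : ℕ} :
    p ∈ fullChain C j ↔ lv C p < j := by
  simp [fullChain]

lemma fullChain_mono {C : Finset (Finset (Fin n))} {j j' : ℕ} (h : j ≤ j') :
    fullChain C j ⊆ fullChain C j' := by
  intro p hp
  rw [mem_fullChain] at hp ⊢
  omega

lemma lv_le_card {C : Finset (Finset (Fin n))} (p : Fin n) : lv C p ≤ C.card :=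
  Finset.card_filter_le _ _

/-- The `j`-th block of the flag. -/
noncomputable def blockJ (C : Finset (Finset (Fin n))) (j : ℕ) : Finset (Fin n) :=
  Finset.univ.filter (fun p => lv C p = j)

lemma mem_blockJ {C : Finset (Finset (Fin n))} {p : Fin n} {j : ℕ} :
    p ∈ blockJ C j ↔ lv C p = j := by
  simp [blockJ]

lemma fullChain_sdiff (C : Finset (Finset (Fin n))) (j : ℕ) :
    fullChain C (j + 1) \ fullChain C j = blockJ C j := by
  ext p
  simp only [Finset.mem_sdiff, mem_fullChain, mem_blockJ]
  omega

lemma card_blockJ (C : Finset (Finset (Fin n))) (j : ℕ) :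
    (blockJ C j).card = (fullChain C (j + 1)).card - (fullChain C j).card := by
  rw [← fullChain_sdiff, Finset.card_sdiff_of_subset (fullChain_mono (Nat.le_succ j))]

/-- The `j`-th minor of the flag. -/
noncomputable def minorJ (B C : Finset (Finset (Fin n))) (j : ℕ) : Finset (Finset (Fin n)) :=
  bsMinor B (fullChain C (j + 1)) (fullChain C j)

lemma mem_minorJ {B C : Finset (Finset (Fin n))} {j : ℕ} {J : Finset (Fin n)} :
    J ∈ minorJ B C j ↔
      J ⊆ blockJ C j ∧ J.Nonempty ∧ ∃ S' ⊆ fullChain C j, J ∪ S' ∈ B := by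
  unfold minorJ bsMinor
  simp only [Finset.mem_filter, Finset.mem_powerset, fullChain_sdiff]

lemma minorJ_closed {B C : Finset (Finset (Fin n))} (hB : IsBuildingSet n B) {j : ℕ}
    {J₁ J₂ : Finset (Fin n)} (h1 : J₁ ∈ minorJ B C j) (h2 : J₂ ∈ minorJ B C j)
    (hint : (J₁ ∩ J₂).Nonempty) : J₁ ∪ J₂ ∈ minorJ B C j := by
  rw [mem_minorJ] at h1 h2 ⊢
  obtain ⟨hs1, hne1, S1, hS1, hB1⟩ := h1
  obtain ⟨hs2, hne2, S2, hS2, hB2⟩ := h2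
  refine ⟨Finset.union_subset hs1 hs2, hne1.mono Finset.subset_union_left,
    S1 ∪ S2, Finset.union_subset hS1 hS2, ?_⟩
  have hint' : ((J₁ ∪ S1) ∩ (J₂ ∪ S2)).Nonempty :=
    hint.mono (Finset.inter_subset_inter Finset.subset_union_left Finset.subset_union_left)
  have := hB.2.2 _ hB1 _ hB2 hint'
  rwa [Finset.union_union_union_comm] at this

lemma singleton_mem_minorJ {B C : Finset (Finset (Fin n))} (hB : IsBuildingSet n B)
    {p : Fin n} : {p} ∈ minorJ B C (lv C p) := by
  rw [mem_minorJ]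
  refine ⟨by simp [mem_blockJ], ⟨p, Finset.mem_singleton_self p⟩,
    ∅, Finset.empty_subset _, ?_⟩
  simpa using hB.2.1 p

/-- The cells (maximal elements) of the `j`-th minor. -/
noncomputable def cellsJ (B C : Finset (Finset (Fin n))) (j : ℕ) : Finset (Finset (Fin n)) :=
  (minorJ B C j).filter (fun M => ∀ K ∈ minorJ B C j, M ⊆ K → M = K)

lemma mem_cellsJ {B C : Finset (Finset (Fin n))} {j : ℕ} {M : Finset (Fin n)} :
    M ∈ cellsJ B C j ↔ M ∈ minorJ B C j ∧ ∀ K ∈ minorJ B C j, M ⊆ K → M = K := by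
  unfold cellsJ
  exact Finset.mem_filter

lemma cComp_minorJ (B C : Finset (Finset (Fin n))) (j : ℕ) :
    cComp (minorJ B C j) = (cellsJ B C j).card := rfl

lemma exists_cell_above {B C : Finset (Finset (Fin n))} {j : ℕ} {J : Finset (Fin n)}
    (hJ : J ∈ minorJ B C j) : ∃ M ∈ cellsJ B C j, J ⊆ M := by
  have hT : ((minorJ B C j).filter (fun K => J ⊆ K)).Nonempty :=
    ⟨J, Finset.mem_filter.2 ⟨hJ, Finset.Subset.refl J⟩⟩
  obtain ⟨M, hMT, hmax⟩ : ∃ M ∈ (minorJ B C j).filter (fun K => J ⊆ K),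
      ∀ K ∈ (minorJ B C j).filter (fun K => J ⊆ K), ¬ M ⊂ K := by
    obtain ⟨M, hM1, hM2⟩ := Finset.exists_maximal hT
    exact ⟨M, hM1, fun K hK hlt => (not_le_of_gt hlt) (hM2 hK hlt.le)⟩
  rw [Finset.mem_filter] at hMT
  refine ⟨M, mem_cellsJ.2 ⟨hMT.1, ?_⟩, hMT.2⟩
  intro K hK hMK
  by_contra hne
  exact hmax K (Finset.mem_filter.2 ⟨hK, hMT.2.trans hMK⟩)
    (Finset.ssubset_iff_subset_ne.2 ⟨hMK, hne⟩)

lemma cells_subset_block {B C : Finset (Finset (Fin n))} {j : ℕ} {M : Finset (Fin n)}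
    (hM : M ∈ cellsJ B C j) : M ⊆ blockJ C j :=
  (mem_minorJ.1 (mem_cellsJ.1 hM).1).1

lemma cells_nonempty {B C : Finset (Finset (Fin n))} {j : ℕ} {M : Finset (Fin n)}
    (hM : M ∈ cellsJ B C j) : M.Nonempty :=
  (mem_minorJ.1 (mem_cellsJ.1 hM).1).2.1

lemma cells_disjoint_same {B C : Finset (Finset (Fin n))} (hB : IsBuildingSet n B) {j : ℕ}
    {M M' : Finset (Fin n)} (hM : M ∈ cellsJ B C j) (hM' : M' ∈ cellsJ B C j)
    (hne : M ≠ M') : Disjoint M M' := by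
  by_contra hnd
  obtain ⟨a, ha, ha'⟩ := Finset.not_disjoint_iff.1 hnd
  rw [mem_cellsJ] at hM hM'
  have hu : M ∪ M' ∈ minorJ B C j :=
    minorJ_closed hB hM.1 hM'.1 ⟨a, Finset.mem_inter.2 ⟨ha, ha'⟩⟩
  have e1 := hM.2 _ hu Finset.subset_union_left
  have e2 := hM'.2 _ hu Finset.subset_union_right
  exact hne (e1.trans e2.symm)

/-- All cells of all minors. -/
noncomputable def allCells (B C : Finset (Finset (Fin n))) : Finset (Finset (Fin n)) :=
  (Finset.range (C.card + 1)).biUnion (fun j => cellsJ B C j)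

lemma cells_level {B C : Finset (Finset (Fin n))} {j : ℕ} {M : Finset (Fin n)}
    (hM : M ∈ cellsJ B C j) {p : Fin n} (hp : p ∈ M) : lv C p = j :=
  mem_blockJ.1 (cells_subset_block hM hp)

lemma allCells_disjoint {B C : Finset (Finset (Fin n))} (hB : IsBuildingSet n B)
    {M M' : Finset (Fin n)} (hM : M ∈ allCells B C) (hM' : M' ∈ allCells B C)
    (hne : M ≠ M') : Disjoint M M' := by
  obtain ⟨j, _, hMj⟩ := Finset.mem_biUnion.1 hM
  obtain ⟨j', _, hMj'⟩ := Finset.mem_biUnion.1 hM'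
  by_cases hjj : j = j'
  · subst hjj; exact cells_disjoint_same hB hMj hMj' hne
  · rw [Finset.disjoint_left]
    intro a ha ha'
    exact hjj ((cells_level hMj ha).symm.trans (cells_level hMj' ha'))

lemma allCells_cover {B C : Finset (Finset (Fin n))} (hB : IsBuildingSet n B) (p : Fin n) :
    ∃ M ∈ allCells B C, p ∈ M := by
  obtain ⟨M, hM, hpM⟩ := exists_cell_above (singleton_mem_minorJ hB (C := C) (p := p))
  refine ⟨M, Finset.mem_biUnion.2 ⟨lv C p, ?_, hM⟩, hpM (Finset.mem_singleton_self p)⟩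
  rw [Finset.mem_range]
  exact Nat.lt_succ_of_le (lv_le_card p)

lemma allCells_nonempty_mem {B C : Finset (Finset (Fin n))} {M : Finset (Fin n)}
    (hM : M ∈ allCells B C) : M.Nonempty := by
  obtain ⟨j, _, hMj⟩ := Finset.mem_biUnion.1 hM
  exact cells_nonempty hMj

lemma cellsJ_family_disjoint (B C : Finset (Finset (Fin n))) {j j' : ℕ} (h : j ≠ j') :
    Disjoint (cellsJ B C j) (cellsJ B C j') := by
  rw [Finset.disjoint_left]
  intro M hM hM'
  obtain ⟨p, hp⟩ := cells_nonempty hM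
  exact h ((cells_level hM hp).symm.trans (cells_level hM' hp))

lemma card_allCells (B C : Finset (Finset (Fin n))) :
    (allCells B C).card = ∑ j ∈ Finset.range (C.card + 1), cComp (minorJ B C j) := by
  rw [allCells, Finset.card_biUnion (fun x _ y _ h => cellsJ_family_disjoint B C h)]
  exact Finset.sum_congr rfl (fun j _ => (cComp_minorJ B C j).symm)

lemma blockJ_eq_biUnion {B C : Finset (Finset (Fin n))} (hB : IsBuildingSet n B) (j : ℕ) :
    blockJ C j = (cellsJ B C j).biUnion id := by
  apply Finset.Subset.antisymm
  · intro p hp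
    have hlv := mem_blockJ.1 hp
    obtain ⟨M, hM, hpM⟩ := exists_cell_above (singleton_mem_minorJ hB (C := C) (p := p))
    rw [hlv] at hM
    exact Finset.mem_biUnion.2 ⟨M, hM, hpM (Finset.mem_singleton_self p)⟩
  · intro p hp
    obtain ⟨M, hM, hpM⟩ := Finset.mem_biUnion.1 hp
    exact cells_subset_block hM hpM

lemma cComp_le_block {B C : Finset (Finset (Fin n))} (hB : IsBuildingSet n B) (j : ℕ) :
    cComp (minorJ B C j) ≤ (blockJ C j).card := by
  have hcard := Finset.card_biUnion (s := cellsJ B C j) (t := id)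
    (fun x hx y hy h => cells_disjoint_same hB hx hy h)
  rw [cComp_minorJ, blockJ_eq_biUnion hB j, hcard]
  calc (cellsJ B C j).card = ∑ _M ∈ cellsJ B C j, 1 := by simp
    _ ≤ ∑ M ∈ cellsJ B C j, (id M).card :=
        Finset.sum_le_sum (fun M hM => Finset.card_pos.2 (cells_nonempty hM))

lemma sum_card_blockJ (C : Finset (Finset (Fin n))) :
    ∑ j ∈ Finset.range (C.card + 1), (blockJ C j).card = n := by
  have huniv : (Finset.univ : Finset (Fin n))
      = (Finset.range (C.card + 1)).biUnion (fun j => blockJ C j) := by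
    apply Finset.Subset.antisymm
    · intro p _
      refine Finset.mem_biUnion.2 ⟨lv C p, ?_, mem_blockJ.2 rfl⟩
      rw [Finset.mem_range]
      exact Nat.lt_succ_of_le (lv_le_card p)
    · intro p _; exact Finset.mem_univ p
  have hdisj : ∀ x ∈ Finset.range (C.card + 1), ∀ y ∈ Finset.range (C.card + 1),
      x ≠ y → Disjoint (blockJ C x) (blockJ C y) := by
    intro x _ y _ hxy
    rw [Finset.disjoint_left]
    intro p hp hp'
    exact hxy ((mem_blockJ.1 hp).symm.trans (mem_blockJ.1 hp'))
  have := congrArg Finset.card huniv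
  rw [Finset.card_univ, Fintype.card_fin, Finset.card_biUnion hdisj] at this
  exact this.symm

lemma rkB_eq (B C : Finset (Finset (Fin n))) (hB : IsBuildingSet n B) :
    rkB B C = n - (allCells B C).card := by
  rw [rkB, card_allCells]
  have hterm : ∀ j ∈ Finset.range (C.card + 1),
      (fullChain C (j + 1)).card - (fullChain C j).card
          - cComp (bsMinor B (fullChain C (j + 1)) (fullChain C j))
        = (blockJ C j).card - cComp (minorJ B C j) := by
    intro j _
    rw [card_blockJ, minorJ]
  rw [Finset.sum_congr rfl hterm,
    Finset.sum_tsub_distrib _ (fun j _ => cComp_le_block hB j), sum_card_blockJ]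

/-- The natural-valued top part. -/
noncomputable def topN (C : Finset (Finset (Fin n))) (I : Finset (Fin n)) : Finset (Fin n) :=
  I.filter (fun i => ∀ i' ∈ I, lv C i' ≤ lv C i)

lemma topPart_eq_topN (C : Finset (Finset (Fin n))) (I : Finset (Fin n)) :
    topPart (fun p => (lv C p : ℝ)) I = topN C I := by
  rw [topPart, topN]
  refine Finset.filter_congr (fun i _ => ?_)
  constructor
  · intro h i' hi'
    exact_mod_cast h i' hi'
  · intro h i' hi'
    exact_mod_cast h i' hi'

lemma topN_mem_minorJ {B C : Finset (Finset (Fin n))} {I : Finset (Fin n)}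
    (hI : I ∈ B) (hB : IsBuildingSet n B) :
    ∃ j ∈ Finset.range (C.card + 1), topN C I ∈ minorJ B C j := by
  obtain ⟨i0, hi0, hmax⟩ := I.exists_max_image (lv C) (hB.1 I hI)
  set j := lv C i0 with hj
  refine ⟨j, Finset.mem_range.2 (Nat.lt_succ_of_le (hj ▸ lv_le_card i0)), ?_⟩
  rw [mem_minorJ]
  have htop : ∀ i ∈ topN C I, lv C i = j := by
    intro i hi
    rw [topN, Finset.mem_filter] at hi
    exact le_antisymm (hmax i hi.1) (hi.2 i0 hi0)
  refine ⟨?_, ⟨i0, Finset.mem_filter.2 ⟨hi0, hmax⟩⟩, I.filter (fun i => ¬ ∀ i' ∈ I, lv C i' ≤ lv C i), ?_, ?_⟩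
  · intro i hi
    exact mem_blockJ.2 (htop i hi)
  · intro i hi
    rw [Finset.mem_filter] at hi
    push_neg at hi
    obtain ⟨hiI, i', hi', hlt⟩ := hi
    rw [mem_fullChain]
    calc lv C i < lv C i' := hlt
      _ ≤ j := hmax i' hi'
  · rw [topN, Finset.filter_union_filter_not_eq]
    exact hI

lemma minor_mem_eq_topN {B C : Finset (Finset (Fin n))} {j : ℕ} {M : Finset (Fin n)}
    (hM : M ∈ minorJ B C j) : ∃ I ∈ B, topN C I = M := by
  rw [mem_minorJ] at hM
  obtain ⟨hMb, hMne, S', hS', hMS⟩ := hM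
  refine ⟨M ∪ S', hMS, ?_⟩
  obtain ⟨m0, hm0⟩ := hMne
  have hlvM : ∀ i ∈ M, lv C i = j := fun i hi => mem_blockJ.1 (hMb hi)
  have hlvS : ∀ i ∈ S', lv C i < j := fun i hi => mem_fullChain.1 (hS' hi)
  have hle : ∀ i ∈ M ∪ S', lv C i ≤ j := by
    intro i hi
    rcases Finset.mem_union.1 hi with h | h
    · exact (hlvM i h).le
    · exact (hlvS i h).le
  apply Finset.Subset.antisymm
  · intro i hi
    rw [topN, Finset.mem_filter] at hi
    obtain ⟨hiU, hmax⟩ := hi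
    have hij : lv C i = j :=
      le_antisymm (hle i hiU) ((hlvM m0 hm0) ▸ hmax m0 (Finset.mem_union_left _ hm0))
    rcases Finset.mem_union.1 hiU with h | h
    · exact h
    · exact absurd hij (Nat.ne_of_lt (hlvS i h))
  · intro i hi
    rw [topN, Finset.mem_filter]
    refine ⟨Finset.mem_union_left _ hi, fun i' hi' => ?_⟩
    rw [hlvM i hi]
    exact hle i' hi'

/-- The two sups of spans agree. -/
lemma sup_spans_eq {B C : Finset (Finset (Fin n))} (hB : IsBuildingSet n B) :
    B.sup (fun I => Submodule.span ℝ (diffSet (topN C I)))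
      = (allCells B C).sup (fun M => Submodule.span ℝ (diffSet M)) := by
  apply le_antisymm
  · apply Finset.sup_le
    intro I hI
    obtain ⟨j, hjr, hmem⟩ := topN_mem_minorJ hI hB
    obtain ⟨M, hM, hsub⟩ := exists_cell_above hmem
    have hMall : M ∈ allCells B C := Finset.mem_biUnion.2 ⟨j, hjr, hM⟩
    exact le_trans (Submodule.span_mono (diffSet_mono hsub))
      (Finset.le_sup (f := fun M => Submodule.span ℝ (diffSet M)) hMall)
  · apply Finset.sup_le
    intro M hM
    obtain ⟨j, _, hMj⟩ := Finset.mem_biUnion.1 hM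
    obtain ⟨I, hI, hIM⟩ := minor_mem_eq_topN (mem_cellsJ.1 hMj).1
    rw [← hIM]
    exact Finset.le_sup (f := fun I => Submodule.span ℝ (diffSet (topN C I))) hI

/-- `ω = lv` lies in the relative interior of the braid cone of the flag. -/
lemma lv_mem_relint {C : Finset (Finset (Fin n))} (hC : IsFlag n C) :
    (fun p => (lv C p : ℝ)) ∈ relintBraidCone C := by
  intro p q
  constructor
  all_goals simp only []
  · intro h
    have : lv C p = lv C q := by
      unfold lv
      congr 1
      exact Finset.filter_congr (fun A hA => by rw [h A hA])
    show ((lv C p : ℝ)) = (lv C q : ℝ)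
    exact_mod_cast this
  · rintro ⟨A, hA, hpA, hqA⟩
    have hss : C.filter (fun A => p ∉ A) ⊂ C.filter (fun A => q ∉ A) := by
      rw [Finset.ssubset_iff_subset_ne]
      constructor
      · intro A' hA'
        rw [Finset.mem_filter] at hA' ⊢
        refine ⟨hA'.1, ?_⟩
        rcases hC.2 A hA A' hA'.1 with h | h
        · exact absurd (h hpA) hA'.2
        · intro hqA'
          exact hqA (h hqA')
      · intro heq
        have hmem : A ∈ C.filter (fun A => q ∉ A) := Finset.mem_filter.2 ⟨hA, hqA⟩
        rw [← heq, Finset.mem_filter] at hmem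
        exact hmem.2 hpA
    have := Finset.card_lt_card hss
    show ((lv C p : ℝ)) < (lv C q : ℝ)
    exact_mod_cast this

end PartE
lemma pdim_face (n : ℕ) (B C : Finset (Finset (Fin n))) (hB : IsBuildingSet n B) :
    pdim (argmaxSet (nestoh B) (fun p => (lv C p : ℝ))) = rkB B C := by
  have hne : ∀ I ∈ B, (pts (topPart (fun p => (lv C p : ℝ)) I)).Nonempty :=
    fun I hI => pts_nonempty (topPart_nonempty _ (hB.1 I hI))
  rw [pdim, argmax_nestoh B hB.1 (fun p => (lv C p : ℝ)), vectorSpan_convexHull',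
    vectorSpan_finset_sum B _ hne]
  have hsup : B.sup (fun I => vectorSpan ℝ
        ((pts (topPart (fun p => (lv C p : ℝ)) I) : Finset (Fin n → ℝ)) : Set (Fin n → ℝ)))
      = B.sup (fun I => Submodule.span ℝ (diffSet (topN C I))) := by
    refine Finset.sup_congr rfl (fun I _ => ?_)
    rw [vectorSpan_pts, topPart_eq_topN]
  rw [hsup, sup_spans_eq hB,
    finrank_cells _ (fun M hM => allCells_nonempty_mem hM)
      (fun M hM M' hM' h => allCells_disjoint hB hM hM' h) (allCells_cover hB),
    rkB_eq B C hB]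

/-- For a building set `B` on `[n]`, the weighted quasisymmetric enumerator of
the nestohedron `P_B` coincides with the value of the universal morphism `Ψ_q` of combinatorial
Hopf algebras on `[B]`:  `F_q(P_B) = Ψ_q([B]) = Σ_L q^{rk_B(L)} M_{type(L)}`, the sum over all
flags `L` of subsets of `[n]`.  Here `F_q(P_B) = Σ_L q^{dim π_{P_B}(L)} M_{type(L)}` with
`π_{P_B}(L) = faceOf L` the face of `P_B` attached to the flag `L`. -/
theorem FqEnum_nestohedron_eq_Psi (n : ℕ) (hn : 0 < n)
    (B : Finset (Finset (Fin n))) (hB : IsBuildingSet n B)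
    (faceOf : Finset (Finset (Fin n)) → Set (Fin n → ℝ))
    (hface : ∀ C : Finset (Finset (Fin n)), IsFlag n C →
      IsFace (nestoh B) (faceOf C) ∧
        ∀ ω ∈ relintBraidCone C, argmaxSet (nestoh B) ω = faceOf C)
    (q : ℚ) :
    FqEnum n (fun C => pdim (faceOf C)) q
      = ∑ C : Finset (Finset (Fin n)),
          (if IsFlag n C then q ^ (rkB B C) • Mc (flagType C) else 0) := by
  unfold FqEnum
  apply Finset.sum_congr rfl
  intro C _
  by_cases hC : IsFlag n C
  · rw [if_pos hC, if_pos hC]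
    have hfc := (hface C hC).2 _ (lv_mem_relint hC)
    show q ^ pdim (faceOf C) • Mc (flagType C) = _
    rw [← hfc, pdim_face n B C hB]
  · rw [if_neg hC, if_neg hC]
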